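/- Let A be a Banach algebra that is a left ideal in its bidual A** (with the first Arens product). Then the canonical image of A is contained in the weak left topological center Z̃₁ˡ(A**), i.e., for every a ∈ A the map a'' ↦ a·a'' from A** to A** is weak*-to-weak continuous. -/

import Mathlib

open NormedSpace ContinuousLinearMap

noncomputable section

namespace NormedSpace

/-- The topological dual of a seminormed space `E` (as in the older Mathlib). -/
def Dual (𝕜 : Type*) [NontriviallyNormedField 𝕜] (E : Type*) [SeminormedAddCommGroup E]
    [NormedSpace 𝕜 E] := E →L[𝕜] 𝕜

instance (𝕜 : Type*) [NontriviallyNormedField 𝕜] (E : Type*) [NormedAddCommGroup E]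
    [NormedSpace 𝕜 E] : NormedAddCommGroup (Dual 𝕜 E) :=
  ContinuousLinearMap.toNormedAddCommGroup

instance (𝕜 : Type*) [NontriviallyNormedField 𝕜] (E : Type*) [NormedAddCommGroup E]
    [NormedSpace 𝕜 E] : NormedSpace 𝕜 (Dual 𝕜 E) :=
  ContinuousLinearMap.toNormedSpace

instance (𝕜 : Type*) [NontriviallyNormedField 𝕜] (E : Type*) [SeminormedAddCommGroup E]
    [NormedSpace 𝕜 E] : FunLike (Dual 𝕜 E) E 𝕜 :=
  ContinuousLinearMap.funLike

instance (𝕜 : Type*) [NontriviallyNormedField 𝕜] (E : Type*) [SeminormedAddCommGroup E]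
    [NormedSpace 𝕜 E] : ContinuousLinearMapClass (Dual 𝕜 E) 𝕜 E 𝕜 :=
  ContinuousLinearMap.continuousSemilinearMapClass

end NormedSpace

section Core

variable (X Y Z : Type*)
  [NormedAddCommGroup X] [NormedSpace ℝ X]
  [NormedAddCommGroup Y] [NormedSpace ℝ Y]
  [NormedAddCommGroup Z] [NormedSpace ℝ Z]

/-- The dual (adjoint) map of a continuous linear map. -/
def dualMapCLM (T : X →L[ℝ] Y) : Dual ℝ Y →L[ℝ] Dual ℝ X :=
  (ContinuousLinearMap.compSL X Y ℝ (RingHom.id ℝ) (RingHom.id ℝ)).flip T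

variable {X Y Z}

/-- The adjoint of a continuous bilinear map `m : X × Y → Z`, as a bilinear map
`Z* × X → Y*`, `⟨adjBil m z' x, y⟩ = ⟨z', m x y⟩`. -/
def adjBil (m : X →L[ℝ] Y →L[ℝ] Z) : Dual ℝ Z →L[ℝ] X →L[ℝ] Dual ℝ Y :=
  ((ContinuousLinearMap.compSL X (Y →L[ℝ] Z) (Dual ℝ Y) (RingHom.id ℝ) (RingHom.id ℝ)).flip m).comp
    (ContinuousLinearMap.compSL Y Z ℝ (RingHom.id ℝ) (RingHom.id ℝ))

/-- The first Arens extension of a continuous bilinear map `X × Y → Z`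
to the biduals, `X** × Y** → Z**`. -/
def arensExt (m : X →L[ℝ] Y →L[ℝ] Z) :
    Dual ℝ (Dual ℝ X) →L[ℝ] Dual ℝ (Dual ℝ Y) →L[ℝ] Dual ℝ (Dual ℝ Z) :=
  adjBil (adjBil (adjBil m))

variable (E : Type*) [NormedAddCommGroup E] [NormedSpace ℝ E]

/-- The weak-* topology on the bidual `E**`, i.e. the topology of pointwise
convergence on `E*`. -/
def weakStarTop : TopologicalSpace (Dual ℝ (Dual ℝ E)) :=
  ⨅ f : Dual ℝ E, TopologicalSpace.induced (fun F => F f) inferInstance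

/-- The weak topology on the bidual `E**`, i.e. the topology of pointwise
convergence on `E***`. -/
def weakTop : TopologicalSpace (Dual ℝ (Dual ℝ E)) :=
  ⨅ Φ : Dual ℝ (Dual ℝ (Dual ℝ E)), TopologicalSpace.induced (fun F => Φ F) inferInstance

end Core

section Algebra

variable (A : Type*) [NonUnitalNormedRing A] [NormedSpace ℝ A]
  [IsScalarTower ℝ A A] [SMulCommClass ℝ A A]

/-- The first Arens product on the bidual of a Banach algebra. -/
def arens1 : Dual ℝ (Dual ℝ A) →L[ℝ] Dual ℝ (Dual ℝ A) →L[ℝ] Dual ℝ (Dual ℝ A) :=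
  arensExt (ContinuousLinearMap.mul ℝ A)

/-- The second Arens product on the bidual of a Banach algebra. -/
def arens2 (F G : Dual ℝ (Dual ℝ A)) : Dual ℝ (Dual ℝ A) :=
  arensExt ((ContinuousLinearMap.mul ℝ A).flip) G F

/-- The weak left topological center of `A**`: those `F` such that
`G ↦ F □ G` is weak-*-to-weak continuous. -/
def weakLeftCenter : Set (Dual ℝ (Dual ℝ A)) :=
  { F | ∀ Φ : Dual ℝ (Dual ℝ (Dual ℝ A)),
      @Continuous _ _ (weakStarTop A) _ fun G => Φ (arens1 A F G) }

/-- The left topological center of `A**`: those `F` such that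
`G ↦ F □ G` is weak-*-to-weak-* continuous. -/
def leftCenter : Set (Dual ℝ (Dual ℝ A)) :=
  { F | ∀ f : Dual ℝ A,
      @Continuous _ _ (weakStarTop A) _ fun G => arens1 A F G f }

end Algebra


/-- If `A` is a left ideal in `A**` (i.e. `A · A** ⊆ A` for the first
Arens product), then the canonical image of `A` lies in the weak left topological
center of `A**`. -/
theorem stmt3 (A : Type*) [NonUnitalNormedRing A] [NormedSpace ℝ A]
    [IsScalarTower ℝ A A] [SMulCommClass ℝ A A] [CompleteSpace A]
    (h : ∀ (a : A) (F : Dual ℝ (Dual ℝ A)),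
      arens1 A (inclusionInDoubleDual ℝ A a) F ∈ Set.range (inclusionInDoubleDual ℝ A)) :
    ∀ a : A, inclusionInDoubleDual ℝ A a ∈ weakLeftCenter A := by
  intro a Φ
  set f : Dual ℝ A := Φ.comp (inclusionInDoubleDual ℝ A) with hf
  have key : ∀ G : Dual ℝ (Dual ℝ A),
      Φ (arens1 A (inclusionInDoubleDual ℝ A a) G)
        = G (adjBil (ContinuousLinearMap.mul ℝ A) f a) := by
    intro G
    obtain ⟨b, hb⟩ := h a G
    have h1 : Φ (arens1 A (inclusionInDoubleDual ℝ A a) G)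
        = (arens1 A (inclusionInDoubleDual ℝ A a) G) f := by
      rw [← hb]; rfl
    have h2 : (arens1 A (inclusionInDoubleDual ℝ A a) G) f
        = G (adjBil (ContinuousLinearMap.mul ℝ A) f a) := rfl
    rw [h1, h2]
  have : (fun G : Dual ℝ (Dual ℝ A) => Φ (arens1 A (inclusionInDoubleDual ℝ A a) G))
      = fun G => G (adjBil (ContinuousLinearMap.mul ℝ A) f a) := funext key
  rw [this]
  exact continuous_iInf_dom
    (t₁ := fun g : Dual ℝ A =>
      TopologicalSpace.induced (fun F : Dual ℝ (Dual ℝ A) => F g) inferInstance)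
    (i := adjBil (ContinuousLinearMap.mul ℝ A) f a) continuous_induced_dom

end
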